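/- arXiv:2103.16124 — 2 statements merged into one kernel-verified Lean document; each statement's English description precedes it below -/
import Mathlib

section
/- For every positive integer N and n ≥ 1, B_{N,n} equals (-1)^n · n! times the determinant of the n×n matrix M where M_{i,j} = N!/(N+i-j+1)! when i ≥ j, M_{i,j} = 1 when j = i+1, and M_{i,j} = 0 when j > i+1. -/
open PowerSeries Finset

noncomputable def eSer (c : ℂ) : PowerSeries ℂ := PowerSeries.mk fun n => c ^ n / n.factorial

noncomputable def dSer (N f : ℕ) : PowerSeries ℂ :=
  PowerSeries.mk fun m => (N.factorial : ℂ) * (f : ℂ) ^ m / (N + m).factorial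

noncomputable def hB (N n : ℕ) : ℂ :=
  n.factorial * PowerSeries.coeff (R := ℂ) n (dSer N 1)⁻¹

noncomputable def hBP (N n : ℕ) (x : ℂ) : ℂ :=
  n.factorial * PowerSeries.coeff (R := ℂ) n (eSer x * (dSer N 1)⁻¹)

noncomputable def gBP (N f : ℕ) (χ : DirichletCharacter ℂ f) (n : ℕ) (x : ℂ) : ℂ :=
  n.factorial * PowerSeries.coeff (R := ℂ) n
    (((f : ℂ) ^ N)⁻¹ • ((∑ a ∈ Finset.Icc 1 f, (PowerSeries.C (R := ℂ) (χ (a : ZMod f))) * eSer (x + a)) * (dSer N f)⁻¹))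

noncomputable def gB (N f : ℕ) (χ : DirichletCharacter ℂ f) (n : ℕ) : ℂ := gBP N f χ n 0

lemma coeff_dSer_one (N m : ℕ) :
    PowerSeries.coeff (R := ℂ) m (dSer N 1) = (N.factorial : ℂ) / ((N + m).factorial : ℂ) := by
  simp [dSer]

lemma constCoeff_dSer_one (N : ℕ) : PowerSeries.constantCoeff (R := ℂ) (dSer N 1) = 1 := by
  have : PowerSeries.constantCoeff (R := ℂ) (dSer N 1) = PowerSeries.coeff (R := ℂ) 0 (dSer N 1) := by
    simp
  rw [this, coeff_dSer_one]
  simp only [Nat.add_zero]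
  exact div_self (by exact_mod_cast N.factorial_ne_zero)

theorem stmt3 (N : ℕ) (hN : 1 ≤ N) (n : ℕ) (hn : 1 ≤ n) :
    hB N n = (-1) ^ n * (n.factorial : ℂ) *
      Matrix.det (Matrix.of fun i j : Fin n =>
        if (j : ℕ) = (i : ℕ) + 1 then 1
        else if (j : ℕ) ≤ (i : ℕ) then
          (N.factorial : ℂ) / ((N + ((i : ℕ) - (j : ℕ)) + 1).factorial : ℂ)
        else 0) := by
  obtain ⟨m, rfl⟩ : ∃ m, n = m + 1 := ⟨n - 1, by omega⟩
  set d : PowerSeries ℂ := dSer N 1 with hd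
  have hconst : PowerSeries.constantCoeff (R := ℂ) d ≠ 0 := by
    rw [constCoeff_dSer_one]; exact one_ne_zero
  set b : Fin (m + 2) → ℂ := fun j => PowerSeries.coeff (R := ℂ) (j : ℕ) d⁻¹ with hb
  set L : Matrix (Fin (m + 2)) (Fin (m + 2)) ℂ :=
    Matrix.of (fun i j : Fin (m + 2) =>
      if (j : ℕ) ≤ (i : ℕ) then PowerSeries.coeff (R := ℂ) ((i : ℕ) - (j : ℕ)) d else 0) with hLdef
  -- Matrix.mulVec L b = e₀
  have hmul : Matrix.mulVec L b = Pi.single 0 1 := by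
    funext i
    have h1 : (d⁻¹ * d) = 1 := by
      rw [mul_comm]; exact PowerSeries.mul_inv_cancel _ hconst
    have h2 : PowerSeries.coeff (R := ℂ) (i : ℕ) (d⁻¹ * d) =
        ∑ k ∈ Finset.range ((i : ℕ) + 1),
          PowerSeries.coeff (R := ℂ) k d⁻¹ * PowerSeries.coeff (R := ℂ) ((i : ℕ) - k) d := by
      rw [PowerSeries.coeff_mul, Finset.Nat.sum_antidiagonal_eq_sum_range_succ_mk]
    have h3 : (Matrix.mulVec L b) i = ∑ k ∈ Finset.range ((i : ℕ) + 1),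
        PowerSeries.coeff (R := ℂ) k d⁻¹ * PowerSeries.coeff (R := ℂ) ((i : ℕ) - k) d := by
      show (∑ j : Fin (m + 2), L i j * b j) = _
      have hsum : (∑ j : Fin (m + 2), L i j * b j) =
          ∑ j ∈ Finset.range (m + 2),
            (if j ≤ (i : ℕ) then
              PowerSeries.coeff (R := ℂ) ((i : ℕ) - j) d * PowerSeries.coeff (R := ℂ) j d⁻¹ else 0) := by
        rw [Finset.sum_range fun j =>
          (if j ≤ (i : ℕ) then
            PowerSeries.coeff (R := ℂ) ((i : ℕ) - j) d * PowerSeries.coeff (R := ℂ) j d⁻¹ else 0)]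
        refine Finset.sum_congr rfl fun j _ => ?_
        simp only [hLdef, Matrix.of_apply, hb]
        split <;> simp
      rw [hsum, ← Finset.sum_subset (Finset.range_subset_range.2 (show (i : ℕ) + 1 ≤ m + 2 by omega))
        (fun j hjt hjs => if_neg fun h => hjs (Finset.mem_range.2 (by omega)))]
      refine Finset.sum_congr rfl fun j hj => ?_
      rw [if_pos (Nat.lt_succ_iff.mp (Finset.mem_range.mp hj)), mul_comm]
    rw [h3, ← h2, h1]
    rw [PowerSeries.coeff_one, Pi.single_apply]
    simp only [Fin.ext_iff, Fin.val_zero]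
  -- det L = 1
  have hdetL : L.det = 1 := by
    rw [Matrix.det_of_lowerTriangular L (fun i j hij => by
      rw [hLdef, Matrix.of_apply, if_neg]
      have : (i : Fin (m+2)) < j := hij
      simpa using this)]
    refine Finset.prod_eq_one fun i _ => ?_
    simp only [hLdef, Matrix.of_apply, le_refl, if_pos, Nat.sub_self]
    have : PowerSeries.coeff (R := ℂ) 0 d = PowerSeries.constantCoeff (R := ℂ) d := by simp
    rw [this, constCoeff_dSer_one]
  -- b = adjugate L *ᵥ e₀
  have hbadj : b = Matrix.mulVec L.adjugate (Pi.single 0 1) := by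
    rw [← hmul, Matrix.mulVec_mulVec, Matrix.adjugate_mul, hdetL, one_smul, Matrix.one_mulVec]
  have hblast : b (Fin.last (m + 1)) = L.adjugate (Fin.last (m + 1)) 0 := by
    rw [hbadj]
    simp [Matrix.mulVec, dotProduct, Pi.single_apply]
  -- adjugate entry = determinant with updated row, expanded along row 0
  have hadj : L.adjugate (Fin.last (m + 1)) 0 =
      (-1) ^ (m + 1) *
        ((L.updateRow 0 (Pi.single (Fin.last (m + 1)) 1)).submatrix Fin.succ
          (Fin.last (m + 1)).succAbove).det := by
    rw [Matrix.adjugate_apply, Matrix.det_succ_row_zero]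
    rw [Fintype.sum_eq_single (Fin.last (m + 1)) (fun j hj => by
      rw [Matrix.updateRow_self, Pi.single_apply, if_neg hj, mul_zero, zero_mul])]
    rw [Matrix.updateRow_self, Pi.single_apply, if_pos rfl, mul_one, Fin.val_last]
  -- identify the submatrix with the Hessenberg matrix M
  have hsub : ((L.updateRow 0 (Pi.single (Fin.last (m + 1)) 1)).submatrix Fin.succ
      (Fin.last (m + 1)).succAbove) =
      (Matrix.of fun i j : Fin (m + 1) =>
        if (j : ℕ) = (i : ℕ) + 1 then 1
        else if (j : ℕ) ≤ (i : ℕ) then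
          (N.factorial : ℂ) / ((N + ((i : ℕ) - (j : ℕ)) + 1).factorial : ℂ)
        else 0) := by
    funext i j
    have hne : (Fin.succ i : Fin (m + 2)) ≠ 0 := Fin.succ_ne_zero i
    rw [Matrix.submatrix_apply, Fin.succAbove_last, Matrix.updateRow_ne hne]
    simp only [hLdef, Matrix.of_apply, Fin.val_succ, Fin.coe_castSucc]
    have hc0 : PowerSeries.coeff (R := ℂ) 0 d = 1 := by
      rw [PowerSeries.coeff_zero_eq_constantCoeff, hd, constCoeff_dSer_one]
    rcases Nat.lt_trichotomy (j : ℕ) ((i : ℕ) + 1) with hj | hj | hj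
    · have hji : (j : ℕ) ≤ (i : ℕ) := by omega
      rw [if_pos (show (j : ℕ) ≤ (i : ℕ) + 1 by omega),
        if_neg (show ¬(j : ℕ) = (i : ℕ) + 1 by omega), if_pos hji, hd, coeff_dSer_one,
        show N + ((i : ℕ) + 1 - (j : ℕ)) = N + ((i : ℕ) - (j : ℕ)) + 1 by omega]
    · rw [if_pos (show (j : ℕ) ≤ (i : ℕ) + 1 by omega),
        show (i : ℕ) + 1 - (j : ℕ) = 0 by omega, hc0, if_pos hj]
    · rw [if_neg (show ¬(j : ℕ) ≤ (i : ℕ) + 1 by omega),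
        if_neg (show ¬(j : ℕ) = (i : ℕ) + 1 by omega),
        if_neg (show ¬(j : ℕ) ≤ (i : ℕ) by omega)]
  have hbn : PowerSeries.coeff (R := ℂ) (m + 1) d⁻¹ =
      (-1) ^ (m + 1) *
        (Matrix.of fun i j : Fin (m + 1) =>
          if (j : ℕ) = (i : ℕ) + 1 then 1
          else if (j : ℕ) ≤ (i : ℕ) then
            (N.factorial : ℂ) / ((N + ((i : ℕ) - (j : ℕ)) + 1).factorial : ℂ)
          else 0).det := by
    have : b (Fin.last (m + 1)) = PowerSeries.coeff (R := ℂ) (m + 1) d⁻¹ := by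
      simp [hb]
    rw [← this, hblast, hadj, hsub]
  rw [hB, hbn]
  ring
end

section
/- Let χ be a Dirichlet character of conductor f and N a positive integer. Then for all n ≥ 0, B_{N,n,χ} = Σ_{a=1}^{f} χ(a) · Σ_{k=0}^{n} binomial(n,k) · B_{N,k} · a^{n-k} · f^{k-N}. -/
open PowerSeries Finset

lemma dSer_const (N : ℕ) : constantCoeff (R := ℂ) (dSer N 1) = 1 := by
  simp [dSer, ← coeff_zero_eq_constantCoeff, Nat.factorial_ne_zero]

lemma rescale_dSer (N f : ℕ) : rescale (f : ℂ) (dSer N 1) = dSer N f := by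
  ext m
  simp [coeff_rescale, dSer, mul_div_assoc]
  ring

lemma inv_dSer (N f : ℕ) : (dSer N f)⁻¹ = rescale (f : ℂ) (dSer N 1)⁻¹ := by
  have hc : constantCoeff (R := ℂ) (rescale (f : ℂ) (dSer N 1)) ≠ 0 := by
    rw [← coeff_zero_eq_constantCoeff, coeff_rescale, pow_zero, one_mul,
      coeff_zero_eq_constantCoeff, dSer_const]
    exact one_ne_zero
  rw [← rescale_dSer, PowerSeries.inv_eq_iff_mul_eq_one hc, ← map_mul,
    PowerSeries.inv_mul_cancel _ (by rw [dSer_const]; exact one_ne_zero), map_one]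

lemma key (N f n : ℕ) (a : ℂ) :
    (n.factorial : ℂ) * PowerSeries.coeff (R := ℂ) n (eSer a * (dSer N f)⁻¹) =
    ∑ k ∈ Finset.range (n + 1), (n.choose k : ℂ) * hB N k * a ^ (n - k) * (f : ℂ) ^ k := by
  rw [inv_dSer, PowerSeries.coeff_mul, Nat.sum_antidiagonal_eq_sum_range_succ_mk, Finset.mul_sum,
    ← Finset.sum_range_reflect]
  refine Finset.sum_congr rfl fun k hk => ?_
  have hk' : k ≤ n := Nat.lt_succ_iff.mp (Finset.mem_range.mp hk)
  simp only [eSer, coeff_mk, coeff_rescale, Nat.succ_sub_one]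
  rw [hB]
  have h1 : (n.choose k : ℂ) * k.factorial * (n-k).factorial = n.factorial := by
    exact_mod_cast congrArg (Nat.cast : ℕ → ℂ) (Nat.choose_mul_factorial_mul_factorial hk')
  field_simp
  rw [Nat.sub_sub_self hk', ← h1]
  have h2 : ((n-k).factorial : ℂ) ≠ 0 := Nat.cast_ne_zero.mpr (Nat.factorial_ne_zero _)
  field_simp

theorem stmt6 (N f : ℕ) (hN : 1 ≤ N) (hf : 0 < f) (χ : DirichletCharacter ℂ f)
    (hχ : χ.IsPrimitive) (n : ℕ) :
    gB N f χ n = ∑ a ∈ Finset.Icc 1 f, χ (a : ZMod f) *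
      ∑ k ∈ Finset.range (n + 1), (n.choose k : ℂ) * hB N k * (a : ℂ) ^ (n - k) *
        (f : ℂ) ^ ((k : ℤ) - (N : ℤ)) := by
  have hf0 : (f : ℂ) ≠ 0 := Nat.cast_ne_zero.mpr hf.ne'
  unfold gB gBP
  have hS : (∑ a ∈ Finset.Icc 1 f, (PowerSeries.C (R := ℂ) (χ (a : ZMod f))) * eSer ((0:ℂ) + a)) *
      (dSer N f)⁻¹
      = ∑ a ∈ Finset.Icc 1 f, (PowerSeries.C (R := ℂ) (χ (a : ZMod f))) * (eSer (a:ℂ) * (dSer N f)⁻¹) := by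
    rw [Finset.sum_mul]
    simp [mul_assoc]
  rw [hS, map_smul, map_sum, smul_eq_mul, Finset.mul_sum, Finset.mul_sum]
  refine Finset.sum_congr rfl fun a _ => ?_
  rw [PowerSeries.coeff_C_mul]
  simp only [zpow_sub₀ hf0, zpow_natCast, ← mul_div_assoc]
  rw [← Finset.sum_div, ← key N f n a]
  have hfN : ((f:ℂ))^N ≠ 0 := pow_ne_zero _ hf0
  field_simp
end
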